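/- (Local existence for the nonlinear wave equation, commutative case θ = 0.) Let d ≥ 1, let p ≥ 2 be an integer, let u_0, u_1 ∈ L²(ℝ^d), let T > 0, let h : (0,T] → ℝ be measurable and positive with ∫_0^T h(s)² ds < ∞, and let A : L²(ℝ^d) → L^{2p}(ℝ^d) be a bounded linear operator. Then there exist T* ∈ (0,T] and a continuous function u : [0,T*] → L²(ℝ^d) such that for all t ∈ [0,T*], u(t) = u_0 + t·u_1 + ∫_0^t (t − s)·h(s)·|A u(s)|^p ds, the integral being a Bochner integral in L²(ℝ^d). -/

import Mathlib

open MeasureTheory ENNReal NNReal Finset intervalIntegral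

set_option maxHeartbeats 1000000


open Finset in
lemma pow_diff_bound (p : ℕ) (a b : ℝ) :
    |(|a| ^ p - |b| ^ p)| ≤ p * (|a| + |b|) ^ (p - 1) * |a - b| := by
  set x := |a|; set y := |b|
  have hx : 0 ≤ x := abs_nonneg a
  have hy : 0 ≤ y := abs_nonneg b
  have key : |x ^ p - y ^ p| ≤ p * (x + y) ^ (p - 1) * |x - y| := by
    have hfac := geom_sum₂_mul x y p
    calc |x ^ p - y ^ p| = |∑ i ∈ range p, x ^ i * y ^ (p - 1 - i)| * |x - y| := by
          rw [← abs_mul, hfac]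
      _ ≤ (p * (x + y) ^ (p - 1)) * |x - y| := by
          gcongr
          calc |∑ i ∈ range p, x ^ i * y ^ (p - 1 - i)|
              ≤ ∑ i ∈ range p, |x ^ i * y ^ (p - 1 - i)| := Finset.abs_sum_le_sum_abs _ _
            _ ≤ ∑ i ∈ range p, (x + y) ^ (p - 1) := by
                apply Finset.sum_le_sum
                intro i hi
                rw [Finset.mem_range] at hi
                rw [abs_mul, abs_pow, abs_pow, abs_of_nonneg hx, abs_of_nonneg hy]
                calc x ^ i * y ^ (p - 1 - i) ≤ (x + y) ^ i * (x + y) ^ (p - 1 - i) := by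
                      gcongr <;> [exact le_add_of_nonneg_right hy; exact le_add_of_nonneg_left hx]
                  _ = (x + y) ^ (p - 1) := by
                      rw [← pow_add]
                      congr 1
                      omega
            _ = p * (x + y) ^ (p - 1) := by simp [Finset.sum_const, nsmul_eq_mul]
  exact key.trans (mul_le_mul_of_nonneg_left (abs_abs_sub_abs_le_abs_sub a b) (by positivity))


variable {α : Type*} [MeasurableSpace α] {μ : Measure α}

lemma exponent_eq (p : ℕ) (hp : 2 ≤ p) :
    ((2 : ℝ≥0∞) * p) = 2 * ENNReal.ofReal (p : ℝ) := by
  rw [ENNReal.ofReal_natCast]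

-- ‖N w‖ = ‖w‖ ^ p
lemma nemytskii_norm (p : ℕ) (hp : 2 ≤ p) [Fact ((1 : ℝ≥0∞) ≤ 2 * p)]
    (w : Lp ℝ (2 * p) μ) (Nw : Lp ℝ 2 μ)
    (hNw : (Nw : α → ℝ) =ᵐ[μ] fun x => |w x| ^ p) :
    ‖Nw‖ = ‖w‖ ^ p := by
  have h0 : (0 : ℝ) < (p : ℝ) := by positivity
  have e1 : eLpNorm (Nw : α → ℝ) 2 μ = eLpNorm (fun x => ‖(w : α → ℝ) x‖ ^ (p : ℝ)) 2 μ := by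
    refine eLpNorm_congr_ae (hNw.trans (Filter.Eventually.of_forall fun x => ?_))
    simp [Real.rpow_natCast, Real.norm_eq_abs]
  rw [Lp.norm_def, Lp.norm_def, e1, eLpNorm_norm_rpow _ h0, ← exponent_eq p hp,
    ← ENNReal.toReal_rpow, Real.rpow_natCast]

lemma nemytskii_lip (p : ℕ) (hp : 2 ≤ p) [Fact ((1 : ℝ≥0∞) ≤ 2 * p)]
    (w v : Lp ℝ (2 * p) μ) (Nw Nv : Lp ℝ 2 μ)
    (hNw : (Nw : α → ℝ) =ᵐ[μ] fun x => |w x| ^ p)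
    (hNv : (Nv : α → ℝ) =ᵐ[μ] fun x => |v x| ^ p) :
    ‖Nw - Nv‖ ≤ p * (‖w‖ + ‖v‖) ^ (p - 1) * ‖w - v‖ := by
  classical
  have hw := Lp.aestronglyMeasurable w
  have hv := Lp.aestronglyMeasurable v
  set g : α → ℝ := fun x => |(w : α → ℝ) x| + |(v : α → ℝ) x| with hgdef
  set ψ : α → ℝ := fun x => g x ^ (p - 1) with hψdef
  set φ : α → ℝ := fun x => (p : ℝ) * (g x) ^ (p - 1) with hφdef
  have hφm : AEStronglyMeasurable φ μ := by
    have hc : Continuous fun z : ℝ × ℝ => (p : ℝ) * (|z.1| + |z.2|) ^ (p - 1) := by fun_prop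
    exact hc.comp_aestronglyMeasurable (hw.prodMk hv)
  have hfm : AEStronglyMeasurable ((w : α → ℝ) - (v : α → ℝ)) μ := hw.sub hv
  -- exponent arithmetic
  have hPm : ((p - 1 : ℕ) : ℝ≥0) ≠ 0 := by
    exact_mod_cast Nat.one_le_iff_ne_zero.mp (by omega)
  have hPne : ((p : ℕ) : ℝ≥0) ≠ 0 := by positivity
  have hP0 : (2 * (p : ℝ≥0)) ≠ 0 := by positivity
  set q : ℝ≥0∞ := (((2 * (p : ℝ≥0)) / ((p - 1 : ℕ) : ℝ≥0) : ℝ≥0) : ℝ≥0∞) with hq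
  have hq0 : ((2 * (p : ℝ≥0)) / ((p - 1 : ℕ) : ℝ≥0) : ℝ≥0) ≠ 0 := div_ne_zero hP0 hPm
  have h2p : ((2 * (p : ℝ≥0) : ℝ≥0) : ℝ≥0∞) = 2 * (p : ℝ≥0∞) := by push_cast; ring
  have hreal : (1 : ℝ≥0) / 2 = 1 / ((2 * (p : ℝ≥0)) / ((p - 1 : ℕ) : ℝ≥0)) + 1 / (2 * (p : ℝ≥0)) := by
    rw [one_div_div, ← add_div]
    have hsum : ((p - 1 : ℕ) : ℝ≥0) + 1 = ((p : ℕ) : ℝ≥0) := by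
      have : ((p - 1 : ℕ) : ℝ≥0) + 1 = ((p - 1 + 1 : ℕ) : ℝ≥0) := by push_cast; ring
      rw [this]; congr 1; omega
    rw [hsum, mul_comm (2 : ℝ≥0) _, div_mul_cancel_left₀ hPne, one_div]
  have hpqr : (1 : ℝ≥0∞) / 2 = 1 / q + 1 / (2 * (p : ℝ≥0∞)) := by
    rw [hq, ← h2p, ← ENNReal.coe_one, ← ENNReal.coe_ofNat,
      ← ENNReal.coe_div (by norm_num), ← ENNReal.coe_div hq0, ← ENNReal.coe_div hP0,
      ← ENNReal.coe_add, ENNReal.coe_inj]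
    exact hreal
  have hqmul : q * ((p - 1 : ℕ) : ℝ≥0∞) = 2 * (p : ℝ≥0∞) := by
    rw [hq, ← ENNReal.coe_natCast (p - 1), ← ENNReal.coe_mul,
      div_mul_cancel₀ _ hPm, h2p]
  -- pointwise bound
  have hb : ∀ x, ‖|(w : α → ℝ) x| ^ p - |(v : α → ℝ) x| ^ p‖ ≤
      ‖(φ • ((w : α → ℝ) - (v : α → ℝ))) x‖ := by
    intro x
    have h1 := pow_diff_bound p ((w : α → ℝ) x) ((v : α → ℝ) x)
    have hφx : 0 ≤ φ x := by positivity
    rw [Real.norm_eq_abs, Pi.smul_apply', Pi.sub_apply, smul_eq_mul, Real.norm_eq_abs,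
      abs_mul, abs_of_nonneg hφx]
    simpa [hφdef, hgdef, mul_assoc] using h1
  -- eLpNorm chain
  set Sw : ℝ≥0∞ := eLpNorm (w : α → ℝ) (2 * p) μ with hSw
  set Sv : ℝ≥0∞ := eLpNorm (v : α → ℝ) (2 * p) μ with hSv
  set Sf : ℝ≥0∞ := eLpNorm ((w : α → ℝ) - (v : α → ℝ)) (2 * p) μ with hSf
  have step1 : eLpNorm ((Nw - Nv : Lp ℝ 2 μ) : α → ℝ) 2 μ =
      eLpNorm (fun x => |(w : α → ℝ) x| ^ p - |(v : α → ℝ) x| ^ p) 2 μ := by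
    refine eLpNorm_congr_ae ?_
    filter_upwards [Lp.coeFn_sub Nw Nv, hNw, hNv] with x h1 h2 h3
    exact h1.trans (by rw [Pi.sub_apply, h2, h3])
  have step2 : eLpNorm (fun x => |(w : α → ℝ) x| ^ p - |(v : α → ℝ) x| ^ p) 2 μ ≤
      eLpNorm (φ • ((w : α → ℝ) - (v : α → ℝ))) 2 μ :=
    eLpNorm_mono_ae (Filter.Eventually.of_forall hb)
  have step3 : eLpNorm (φ • ((w : α → ℝ) - (v : α → ℝ))) 2 μ ≤
      eLpNorm φ q μ * Sf :=
    have : ENNReal.HolderTriple q (2 * (p : ℝ≥0∞)) 2 := ⟨by simpa only [one_div] using hpqr.symm⟩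
    eLpNorm_smul_le_mul_eLpNorm hfm hφm
  have hψnorm : eLpNorm ψ q μ ≤ (Sw + Sv) ^ ((p - 1 : ℕ) : ℝ) := by
    have hψeq : ψ = fun x => ‖g x‖ ^ ((p - 1 : ℕ) : ℝ) := by
      funext x
      rw [Real.rpow_natCast, Real.norm_eq_abs, abs_of_nonneg (by positivity)]
    have hppos : (0 : ℝ) < ((p - 1 : ℕ) : ℝ) := by
      have : 1 ≤ p - 1 := by omega
      exact_mod_cast Nat.lt_of_lt_of_le Nat.zero_lt_one this
    rw [hψeq, eLpNorm_norm_rpow g hppos, ENNReal.ofReal_natCast, hqmul]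
    refine ENNReal.rpow_le_rpow ?_ hppos.le
    have hgeq : g = (fun x => ‖(w : α → ℝ) x‖) + fun x => ‖(v : α → ℝ) x‖ := by
      funext x; simp [hgdef, Real.norm_eq_abs]
    calc eLpNorm g (2 * p) μ
        = eLpNorm ((fun x => ‖(w : α → ℝ) x‖) + fun x => ‖(v : α → ℝ) x‖) (2 * p) μ := by
          rw [hgeq]
      _ ≤ eLpNorm (fun x => ‖(w : α → ℝ) x‖) (2 * p) μ +
          eLpNorm (fun x => ‖(v : α → ℝ) x‖) (2 * p) μ :=
          eLpNorm_add_le hw.norm hv.norm Fact.out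
      _ = Sw + Sv := by rw [eLpNorm_norm, eLpNorm_norm]
  have hφnorm : eLpNorm φ q μ ≤ (p : ℝ≥0∞) * (Sw + Sv) ^ ((p - 1 : ℕ) : ℝ) := by
    have hφeq : φ = (p : ℝ) • ψ := by
      funext x; simp [hφdef, hψdef]
    rw [hφeq, eLpNorm_const_smul]
    have : ‖(p : ℝ)‖ₑ = (p : ℝ≥0∞) := by
      simp [Real.nnnorm_natCast]
    rw [this]
    exact mul_le_mul_right hψnorm _
  have main : eLpNorm ((Nw - Nv : Lp ℝ 2 μ) : α → ℝ) 2 μ ≤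
      (p : ℝ≥0∞) * (Sw + Sv) ^ ((p - 1 : ℕ) : ℝ) * Sf := by
    rw [step1]
    refine (step2.trans step3).trans ?_
    exact mul_le_mul_left hφnorm _
  -- pass to real norms
  have hSwt : Sw ≠ ⊤ := (Lp.eLpNorm_lt_top w).ne
  have hSvt : Sv ≠ ⊤ := (Lp.eLpNorm_lt_top v).ne
  have hSft : Sf ≠ ⊤ := by
    rw [hSf, ← eLpNorm_congr_ae (Lp.coeFn_sub w v)]
    exact (Lp.eLpNorm_lt_top (w - v)).ne
  have hRHSt : (p : ℝ≥0∞) * (Sw + Sv) ^ ((p - 1 : ℕ) : ℝ) * Sf ≠ ⊤ := by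
    apply ENNReal.mul_ne_top
    apply ENNReal.mul_ne_top (by simp)
    · exact ENNReal.rpow_ne_top_of_nonneg (by positivity) (ENNReal.add_ne_top.2 ⟨hSwt, hSvt⟩)
    · exact hSft
  have := ENNReal.toReal_mono hRHSt main
  rw [Lp.norm_def]
  refine this.trans_eq ?_
  have e1 : Sw.toReal = ‖w‖ := (Lp.norm_def w).symm
  have e2 : Sv.toReal = ‖v‖ := (Lp.norm_def v).symm
  have e3 : Sf.toReal = ‖w - v‖ := by rw [Lp.norm_def, eLpNorm_congr_ae (Lp.coeFn_sub w v)]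
  rw [ENNReal.toReal_mul, ENNReal.toReal_mul, ← ENNReal.toReal_rpow, ENNReal.toReal_add hSwt hSvt,
    Real.rpow_natCast, e1, e2, e3, ENNReal.toReal_natCast]


lemma picard_aux {E : Type*} [NormedAddCommGroup E] [NormedSpace ℝ E] [CompleteSpace E]
    (u₀ u₁ : E) (T : ℝ) (hT : 0 < T) (h : ℝ → ℝ) (hmeas : Measurable h)
    (habs : IntegrableOn (fun s => |h s|) (Set.Ioc 0 T) volume)
    (F : E → E) (hFcont : Continuous F)
    (R M K : ℝ) (hM0 : 0 ≤ M) (hK0 : 0 ≤ K)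
    (hR : ‖u₀‖ + T * ‖u₁‖ + 1 ≤ R)
    (hFb : ∀ v : E, ‖v‖ ≤ R → ‖F v‖ ≤ M)
    (hFlip : ∀ v v' : E, ‖v‖ ≤ R → ‖v'‖ ≤ R → ‖F v - F v'‖ ≤ K * ‖v - v'‖) :
    ∃ Tstar ∈ Set.Ioc (0 : ℝ) T, ∃ u : ℝ → E, ContinuousOn u (Set.Icc 0 Tstar) ∧
      ∀ t ∈ Set.Icc (0 : ℝ) Tstar,
        u t = u₀ + t • u₁ + ∫ s in (0 : ℝ)..t, ((t - s) * h s) • F (u s) := by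
  have hT0 : (0 : ℝ) ≤ T := hT.le
  have hR0 : (0 : ℝ) < R := lt_of_lt_of_le (by positivity) hR
  set ε : ℝ := 1 / (T * (M + K) + 1) with hεdef
  have hX : (0 : ℝ) < T * (M + K) + 1 := by positivity
  have hε : 0 < ε := by positivity
  -- choose τ with small ∫|h|
  obtain ⟨τ, hτmem, hIτε⟩ : ∃ τ ∈ Set.Ioc (0 : ℝ) T,
      (∫ s in Set.Ioc (0 : ℝ) τ, |h s|) < ε := by
    have hIccInt : IntegrableOn (fun s => |h s|) (Set.Icc 0 T) volume := by
      rwa [IntegrableOn, ← Measure.restrict_congr_set Ioc_ae_eq_Icc]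
    have hcont := continuousOn_primitive (f := fun s => |h s|) (a := 0) (b := T)
      (μ := volume) hIccInt
    have hcw := hcont 0 ⟨le_refl _, hT0⟩
    rw [ContinuousWithinAt] at hcw
    have h00 : (∫ s in Set.Ioc (0 : ℝ) (0 : ℝ), |h s|) = 0 := by simp
    rw [h00] at hcw
    have hev := hcw (Iio_mem_nhds hε)
    rw [Filter.mem_map, mem_nhdsWithin] at hev
    obtain ⟨U, hUopen, h0U, hsub⟩ := hev
    obtain ⟨δ, hδ, hball⟩ := Metric.isOpen_iff.mp hUopen 0 h0U
    refine ⟨min (δ / 2) T, ⟨lt_min (by linarith) hT, min_le_right _ _⟩, ?_⟩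
    have hmem : min (δ / 2) T ∈ U ∩ Set.Icc 0 T := by
      constructor
      · apply hball
        rw [Metric.mem_ball, Real.dist_eq, sub_zero, abs_of_nonneg (le_min (by linarith) hT0)]
        exact lt_of_le_of_lt (min_le_left _ _) (by linarith)
      · exact ⟨le_min (by linarith) hT0, min_le_right _ _⟩
    exact hsub hmem
  obtain ⟨hτ0, hτT⟩ := hτmem
  have hτle : (0 : ℝ) ≤ τ := hτ0.le
  set Iτ : ℝ := ∫ s in Set.Ioc (0 : ℝ) τ, |h s| with hIτdef
  have hIτ0 : 0 ≤ Iτ := setIntegral_nonneg measurableSet_Ioc fun x _ => abs_nonneg _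
  have hMIτ : T * M * Iτ ≤ 1 := by
    have h1 : T * M * Iτ ≤ T * M * ε := by
      have := mul_le_mul_of_nonneg_left hIτε.le (by positivity : (0:ℝ) ≤ T * M)
      linarith
    have h2 : T * M * ε ≤ 1 := by
      rw [hεdef, mul_one_div, div_le_one hX]
      nlinarith [mul_nonneg hT0 hK0]
    linarith
  set κ : ℝ := T * K * Iτ with hκdef
  have hκ0 : 0 ≤ κ := by positivity
  have hκ1 : κ < 1 := by
    have h1 : κ ≤ T * K * ε := by
      have := mul_le_mul_of_nonneg_left hIτε.le (by positivity : (0:ℝ) ≤ T * K)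
      rw [hκdef]; linarith
    have h2 : T * K * ε < 1 := by
      rw [hεdef, mul_one_div, div_lt_one hX]
      nlinarith [mul_nonneg hT0 hM0]
    linarith
  -- integrability of |h| on [0, τ]
  have habsτ : IntegrableOn (fun s => |h s|) (Set.Ioc 0 τ) volume :=
    habs.mono_set (Set.Ioc_subset_Ioc_right hτT)
  have habsτ' : IntegrableOn (fun s => |h s|) (Set.Icc 0 τ) volume := by
    rwa [IntegrableOn, ← Measure.restrict_congr_set Ioc_ae_eq_Icc]
  -- master integrability lemma
  have hint : ∀ (ω : ℝ → ℝ), Continuous ω → ∀ (c : ℝ → E), Continuous c →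
      IntegrableOn (fun s => (ω s * h s) • c s) (Set.Icc 0 τ) volume := by
    intro ω hω c hc
    obtain ⟨C, hC⟩ := (isCompact_Icc (a := (0:ℝ)) (b := τ)).exists_bound_of_continuousOn
      ((hω.smul hc).continuousOn)
    have hC0 : 0 ≤ C := le_trans (norm_nonneg _) (hC 0 ⟨le_refl _, hτle⟩)
    refine Integrable.mono' (habsτ'.const_mul C) ?_ ?_
    · exact ((hω.measurable.mul hmeas).aestronglyMeasurable.smul hc.aestronglyMeasurable)
    · rw [ae_restrict_iff' measurableSet_Icc]
      refine Filter.Eventually.of_forall fun s hs => ?_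
      have h1 := hC s hs
      rw [Pi.smul_apply', norm_smul, Real.norm_eq_abs] at h1
      rw [norm_smul, Real.norm_eq_abs]
      calc |ω s * h s| * ‖c s‖ = |h s| * (|ω s| * ‖c s‖) := by rw [abs_mul]; ring
        _ ≤ |h s| * C := mul_le_mul_of_nonneg_left h1 (abs_nonneg _)
        _ = C * |h s| := mul_comm _ _
  have hii : ∀ (ω : ℝ → ℝ), Continuous ω → ∀ (c : ℝ → E), Continuous c → ∀ t ∈ Set.Icc (0:ℝ) τ,
      IntervalIntegrable (fun s => (ω s * h s) • c s) volume 0 t := by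
    intro ω hω c hc t ht
    rw [intervalIntegrable_iff_integrableOn_Ioc_of_le ht.1]
    exact (hint ω hω c hc).mono_set fun s hs => ⟨hs.1.le, hs.2.trans ht.2⟩
  -- the extension operator and the Picard map
  set ext : C(Set.Icc (0:ℝ) τ, E) → ℝ → E := fun f t => f (Set.projIcc 0 τ hτle t) with hext
  have hextcont : ∀ f, Continuous (ext f) := fun f => f.continuous.comp continuous_projIcc
  have hextle : ∀ f s, ‖ext f s‖ ≤ ‖f‖ := fun f s => f.norm_coe_le_norm _
  set P : C(Set.Icc (0:ℝ) τ, E) → ℝ → E :=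
    fun f t => u₀ + t • u₁ + ∫ s in (0:ℝ)..t, ((t - s) * h s) • F (ext f s) with hP
  have hPrep : ∀ f, ∀ t ∈ Set.Icc (0:ℝ) τ, P f t = u₀ + t • u₁ +
      (t • (∫ s in (0:ℝ)..t, (1 * h s) • F (ext f s)) -
        ∫ s in (0:ℝ)..t, (s * h s) • F (ext f s)) := by
    intro f t ht
    have hFc : Continuous (fun s => F (ext f s)) := hFcont.comp (hextcont f)
    have h1 := hii (fun _ => 1) continuous_const _ hFc t ht
    have h2 := hii (fun s => s) continuous_id _ hFc t ht
    have h1' : IntervalIntegrable (fun s => t • ((1 * h s) • F (ext f s))) volume 0 t :=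
      h1.smul t
    simp only [hP]
    congr 1
    rw [← intervalIntegral.integral_smul, ← intervalIntegral.integral_sub h1' h2]
    apply intervalIntegral.integral_congr
    intro s hs
    show ((t - s) * h s) • F (ext f s) =
      t • ((1 * h s) • F (ext f s)) - (s * h s) • F (ext f s)
    rw [smul_smul, ← sub_smul]
    congr 1
    ring
  have hPcont : ∀ f, ContinuousOn (P f) (Set.Icc 0 τ) := by
    intro f
    have hFc : Continuous (fun s => F (ext f s)) := hFcont.comp (hextcont f)
    have hQ1 : ContinuousOn (fun t => ∫ s in (0:ℝ)..t, (1 * h s) • F (ext f s))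
        (Set.Icc 0 τ) := by
      have hi : IntegrableOn (fun s => (1 * h s) • F (ext f s)) (Set.uIcc 0 τ) volume := by
        rw [Set.uIcc_of_le hτle]; exact hint _ continuous_const _ hFc
      have := continuousOn_primitive_interval (a := (0:ℝ)) (b := τ) (μ := volume) hi
      rwa [Set.uIcc_of_le hτle] at this
    have hQ2 : ContinuousOn (fun t => ∫ s in (0:ℝ)..t, (s * h s) • F (ext f s))
        (Set.Icc 0 τ) := by
      have hi : IntegrableOn (fun s => (s * h s) • F (ext f s)) (Set.uIcc 0 τ) volume := by
        rw [Set.uIcc_of_le hτle]; exact hint _ continuous_id _ hFc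
      have := continuousOn_primitive_interval (a := (0:ℝ)) (b := τ) (μ := volume) hi
      rwa [Set.uIcc_of_le hτle] at this
    refine ContinuousOn.congr ?_ (fun t ht => hPrep f t ht)
    exact (continuousOn_const.add ((continuous_id.smul continuous_const).continuousOn)).add
      ((continuousOn_id.smul hQ1).sub hQ2)
  -- interval integral of |h| is bounded by Iτ
  have hhii : ∀ t ∈ Set.Icc (0:ℝ) τ, IntervalIntegrable (fun s => |h s|) volume 0 t := by
    intro t ht
    rw [intervalIntegrable_iff_integrableOn_Ioc_of_le ht.1]
    exact habsτ.mono_set (Set.Ioc_subset_Ioc_right ht.2)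
  have hIbound : ∀ t ∈ Set.Icc (0:ℝ) τ, (∫ s in (0:ℝ)..t, |h s|) ≤ Iτ := by
    intro t ht
    rw [intervalIntegral.integral_of_le ht.1, hIτdef]
    exact setIntegral_mono_set habsτ (Filter.Eventually.of_forall fun s => abs_nonneg _)
      (HasSubset.Subset.eventuallyLE (Set.Ioc_subset_Ioc_right ht.2))
  have hInonneg : ∀ t ∈ Set.Icc (0:ℝ) τ, (0:ℝ) ≤ ∫ s in (0:ℝ)..t, |h s| := by
    intro t ht
    apply intervalIntegral.integral_nonneg ht.1
    exact fun s _ => abs_nonneg _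
  -- invariance of the ball
  have hPbound : ∀ f, ‖f‖ ≤ R → ∀ t ∈ Set.Icc (0:ℝ) τ, ‖P f t‖ ≤ R := by
    intro f hf t ht
    have hbnd : ‖∫ s in (0:ℝ)..t, ((t - s) * h s) • F (ext f s)‖ ≤ T * M * Iτ := by
      have hb := intervalIntegral.norm_integral_le_abs_of_norm_le (μ := volume) (a := (0:ℝ)) (b := t)
        (f := fun s => ((t - s) * h s) • F (ext f s)) (g := fun s => (T * M) * |h s|)
        ?_ ((hhii t ht).const_mul _)
      · refine hb.trans ?_
        rw [intervalIntegral.integral_const_mul,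
          abs_of_nonneg (mul_nonneg (by positivity) (hInonneg t ht))]
        calc (T * M) * ∫ s in (0:ℝ)..t, |h s| ≤ (T * M) * Iτ :=
              mul_le_mul_of_nonneg_left (hIbound t ht) (by positivity)
          _ = T * M * Iτ := by ring
      · rw [Set.uIoc_of_le ht.1, ae_restrict_iff' measurableSet_Ioc]
        refine Filter.Eventually.of_forall fun s hs => ?_
        rw [norm_smul, Real.norm_eq_abs, abs_mul]
        have hFv : ‖F (ext f s)‖ ≤ M := hFb _ ((hextle f s).trans hf)
        have hts : |t - s| ≤ T := by
          rw [abs_of_nonneg (sub_nonneg.2 hs.2)]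
          have := ht.2
          linarith [hs.1]
        calc |t - s| * |h s| * ‖F (ext f s)‖ ≤ T * |h s| * M := by
              gcongr
          _ = T * M * |h s| := by ring
    have ht1 : ‖t • u₁‖ ≤ T * ‖u₁‖ := by
      rw [norm_smul, Real.norm_eq_abs, abs_of_nonneg ht.1]
      exact mul_le_mul_of_nonneg_right (ht.2.trans hτT) (norm_nonneg _)
    calc ‖P f t‖ ≤ ‖u₀‖ + ‖t • u₁‖ + ‖∫ s in (0:ℝ)..t, ((t - s) * h s) • F (ext f s)‖ :=
          norm_add₃_le
      _ ≤ ‖u₀‖ + T * ‖u₁‖ + 1 := by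
          have := hbnd.trans hMIτ
          linarith
      _ ≤ R := hR
  -- contraction estimate
  have hPlip : ∀ f g, ‖f‖ ≤ R → ‖g‖ ≤ R → ∀ t ∈ Set.Icc (0:ℝ) τ,
      ‖P f t - P g t‖ ≤ κ * dist f g := by
    intro f g hf hg t ht
    have hFcf : Continuous (fun s => F (ext f s)) := hFcont.comp (hextcont f)
    have hFcg : Continuous (fun s => F (ext g s)) := hFcont.comp (hextcont g)
    have hif : IntervalIntegrable (fun s => ((t - s) * h s) • F (ext f s)) volume 0 t :=
      hii (fun s => t - s) (continuous_const.sub continuous_id) _ hFcf t ht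
    have hig : IntervalIntegrable (fun s => ((t - s) * h s) • F (ext g s)) volume 0 t :=
      hii (fun s => t - s) (continuous_const.sub continuous_id) _ hFcg t ht
    have hdiff : P f t - P g t =
        ∫ s in (0:ℝ)..t, ((t - s) * h s) • (F (ext f s) - F (ext g s)) := by
      have e1 : P f t - P g t = (∫ s in (0:ℝ)..t, ((t - s) * h s) • F (ext f s)) -
          ∫ s in (0:ℝ)..t, ((t - s) * h s) • F (ext g s) := by
        simp only [hP]; abel
      rw [e1, ← intervalIntegral.integral_sub hif hig]
      apply intervalIntegral.integral_congr
      intro s hs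
      show ((t - s) * h s) • F (ext f s) - ((t - s) * h s) • F (ext g s) =
        ((t - s) * h s) • (F (ext f s) - F (ext g s))
      rw [smul_sub]
    rw [hdiff]
    have hb := intervalIntegral.norm_integral_le_abs_of_norm_le (μ := volume) (a := (0:ℝ)) (b := t)
      (f := fun s => ((t - s) * h s) • (F (ext f s) - F (ext g s)))
      (g := fun s => (T * K * dist f g) * |h s|) ?_ ((hhii t ht).const_mul _)
    · refine hb.trans ?_
      have hTKd : (0:ℝ) ≤ T * K * dist f g := by
        have := dist_nonneg (x := f) (y := g)
        positivity
      rw [intervalIntegral.integral_const_mul,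
        abs_of_nonneg (mul_nonneg hTKd (hInonneg t ht))]
      calc (T * K * dist f g) * ∫ s in (0:ℝ)..t, |h s| ≤ (T * K * dist f g) * Iτ :=
            mul_le_mul_of_nonneg_left (hIbound t ht) hTKd
        _ = κ * dist f g := by rw [hκdef]; ring
    · rw [Set.uIoc_of_le ht.1, ae_restrict_iff' measurableSet_Ioc]
      refine Filter.Eventually.of_forall fun s hs => ?_
      rw [norm_smul, Real.norm_eq_abs, abs_mul]
      have hts : |t - s| ≤ T := by
        rw [abs_of_nonneg (sub_nonneg.2 hs.2)]
        have := ht.2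
        linarith [hs.1]
      have hlip : ‖F (ext f s) - F (ext g s)‖ ≤ K * dist f g := by
        refine (hFlip _ _ ((hextle f s).trans hf) ((hextle g s).trans hg)).trans ?_
        refine mul_le_mul_of_nonneg_left ?_ hK0
        have : ‖ext f s - ext g s‖ = dist (f (Set.projIcc 0 τ hτle s)) (g (Set.projIcc 0 τ hτle s)) := by
          rw [dist_eq_norm]
        rw [this]
        exact ContinuousMap.dist_apply_le_dist _
      calc |t - s| * |h s| * ‖F (ext f s) - F (ext g s)‖ ≤ T * |h s| * (K * dist f g) := by
            gcongr
        _ = (T * K * dist f g) * |h s| := by ring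
  -- fixed point in the closed ball
  set S : Set C(Set.Icc (0:ℝ) τ, E) := Metric.closedBall 0 R with hS
  haveI : CompleteSpace ↥S := Metric.isClosed_closedBall.completeSpace_coe
  haveI : Nonempty ↥S := ⟨⟨0, Metric.mem_closedBall_self hR0.le⟩⟩
  have hnorm_of_mem : ∀ f : ↥S, ‖(f : C(Set.Icc (0:ℝ) τ, E))‖ ≤ R := by
    intro f
    have h2 : (f : C(Set.Icc (0:ℝ) τ, E)) ∈
        Metric.closedBall (0 : C(Set.Icc (0:ℝ) τ, E)) R := f.2
    rwa [Metric.mem_closedBall, dist_zero_right] at h2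
  set Φ : ↥S → ↥S := fun f =>
    ⟨ContinuousMap.mk (fun t => P (↑f) ↑t) ((hPcont (↑f)).restrict),
      by
        show _ ∈ Metric.closedBall (0 : C(Set.Icc (0:ℝ) τ, E)) R
        rw [Metric.mem_closedBall, dist_zero_right]
        refine (ContinuousMap.norm_le _ hR0.le).2 fun x => ?_
        exact hPbound (↑f) (hnorm_of_mem f) ↑x x.2⟩ with hΦdef
  have hΦ : ContractingWith κ.toNNReal Φ := by
    constructor
    · have hcoe : (κ.toNNReal : ℝ) < ((1 : ℝ≥0) : ℝ) := by
        rw [Real.coe_toNNReal _ hκ0]; simpa using hκ1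
      exact_mod_cast hcoe
    · apply LipschitzWith.of_dist_le_mul
      intro f g
      have hcoe : (κ.toNNReal : ℝ) = κ := Real.coe_toNNReal _ hκ0
      rw [Subtype.dist_eq, hcoe]
      have hdfg : dist (f : C(Set.Icc (0:ℝ) τ, E)) (g : C(Set.Icc (0:ℝ) τ, E)) = dist f g :=
        (Subtype.dist_eq f g).symm
      refine (ContinuousMap.dist_le (mul_nonneg hκ0 dist_nonneg)).2 fun x => ?_
      have := hPlip (↑f) (↑g) (hnorm_of_mem f) (hnorm_of_mem g) ↑x x.2
      rw [← hdfg]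
      exact (dist_eq_norm _ _).trans_le this
  set uS : ↥S := ContractingWith.fixedPoint Φ hΦ with huS
  have hfix : Φ uS = uS := hΦ.fixedPoint_isFixedPt
  refine ⟨τ, ⟨hτ0, hτT⟩, ext ↑uS, (hextcont ↑uS).continuousOn, ?_⟩
  intro t ht
  have h1 : ext (↑uS) t = (↑uS : C(Set.Icc (0:ℝ) τ, E)) ⟨t, ht⟩ := by
    simp only [hext]
    rw [Set.projIcc_of_mem hτle ht]
  calc ext (↑uS) t = (↑uS : C(Set.Icc (0:ℝ) τ, E)) ⟨t, ht⟩ := h1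
    _ = (↑(Φ uS) : C(Set.Icc (0:ℝ) τ, E)) ⟨t, ht⟩ := by rw [hfix]
    _ = P (↑uS) t := rfl
    _ = u₀ + t • u₁ + ∫ s in (0:ℝ)..t, ((t - s) * h s) • F (ext (↑uS) s) := rfl


theorem stmt16 (d : ℕ) (hd : 1 ≤ d) (p : ℕ) (hp : 2 ≤ p)
    [Fact ((1 : ℝ≥0∞) ≤ 2 * p)]
    (u₀ u₁ : Lp ℝ 2 (volume : Measure (EuclideanSpace ℝ (Fin d))))
    (T : ℝ) (hT : 0 < T)
    (h : ℝ → ℝ) (hmeas : Measurable h)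
    (hpos : ∀ s ∈ Set.Ioc (0 : ℝ) T, 0 < h s)
    (hL2 : IntegrableOn (fun s => h s ^ 2) (Set.Ioc (0 : ℝ) T))
    (A : Lp ℝ 2 (volume : Measure (EuclideanSpace ℝ (Fin d))) →L[ℝ]
         Lp ℝ (2 * p) (volume : Measure (EuclideanSpace ℝ (Fin d))))
    -- `N w` realizes `|w|^p` as an element of `L²(ℝ^d)`
    (N : Lp ℝ (2 * p) (volume : Measure (EuclideanSpace ℝ (Fin d))) →
         Lp ℝ 2 (volume : Measure (EuclideanSpace ℝ (Fin d))))
    (hN : ∀ w, (N w : EuclideanSpace ℝ (Fin d) → ℝ) =ᵐ[volume] fun x => |w x| ^ p) :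
    ∃ Tstar ∈ Set.Ioc (0 : ℝ) T,
      ∃ u : ℝ → Lp ℝ 2 (volume : Measure (EuclideanSpace ℝ (Fin d))),
        ContinuousOn u (Set.Icc 0 Tstar) ∧
        ∀ t ∈ Set.Icc (0 : ℝ) Tstar,
          u t = u₀ + t • u₁ + ∫ s in (0 : ℝ)..t, ((t - s) * h s) • N (A (u s)) := by
  -- integrability of |h|
  have habs : IntegrableOn (fun s => |h s|) (Set.Ioc 0 T) volume := by
    refine Integrable.mono' (g := fun s => 1 + h s ^ 2)
      (by have := (integrableOn_const (C := (1 : ℝ)) (s := Set.Ioc (0 : ℝ) T) (μ := volume) measure_Ioc_lt_top.ne).add hL2; exact this)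
      hmeas.abs.aestronglyMeasurable ?_
    refine Filter.Eventually.of_forall fun s => ?_
    show ‖|h s|‖ ≤ 1 + h s ^ 2
    rw [Real.norm_eq_abs, abs_abs]
    nlinarith [sq_abs (h s), sq_nonneg (|h s| - 1), abs_nonneg (h s)]
  -- the Nemytskii-type estimates
  have hNlip : ∀ w v, ‖N w - N v‖ ≤ (p : ℝ) * (‖w‖ + ‖v‖) ^ (p - 1) * ‖w - v‖ :=
    fun w v => nemytskii_lip p hp w v (N w) (N v) (hN w) (hN v)
  have hNnorm : ∀ w, ‖N w‖ = ‖w‖ ^ p := fun w => nemytskii_norm p hp w (N w) (hN w)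
  have hNc : Continuous N := by
    rw [continuous_iff_continuousAt]
    intro w₀
    refine continuousAt_of_locally_lipschitz one_pos
      ((p : ℝ) * (2 * ‖w₀‖ + 1) ^ (p - 1)) fun w hw => ?_
    rw [dist_eq_norm, dist_eq_norm]
    refine (hNlip w w₀).trans ?_
    have h1 : ‖w‖ + ‖w₀‖ ≤ 2 * ‖w₀‖ + 1 := by
      rw [dist_eq_norm] at hw
      have := norm_sub_norm_le w w₀
      linarith
    gcongr
  set F : Lp ℝ 2 (volume : Measure (EuclideanSpace ℝ (Fin d))) →
      Lp ℝ 2 (volume : Measure (EuclideanSpace ℝ (Fin d))) := fun v => N (A v) with hF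
  have hFcont : Continuous F := hNc.comp A.continuous
  set R : ℝ := ‖u₀‖ + T * ‖u₁‖ + 1 with hRdef
  set M : ℝ := (‖A‖ * R) ^ p with hMdef
  set K : ℝ := (p : ℝ) * (2 * ‖A‖ * R) ^ (p - 1) * ‖A‖ with hKdef
  have hR0 : (0 : ℝ) < R := by positivity
  have hM0 : (0 : ℝ) ≤ M := by positivity
  have hK0 : (0 : ℝ) ≤ K := by positivity
  have hFb : ∀ v, ‖v‖ ≤ R → ‖F v‖ ≤ M := by
    intro v hv
    rw [hF, hNnorm (A v), hMdef]
    refine pow_le_pow_left₀ (norm_nonneg _) ?_ p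
    exact (A.le_opNorm v).trans (mul_le_mul_of_nonneg_left hv (norm_nonneg A))
  have hFlip : ∀ v v', ‖v‖ ≤ R → ‖v'‖ ≤ R → ‖F v - F v'‖ ≤ K * ‖v - v'‖ := by
    intro v v' hv hv'
    refine (hNlip (A v) (A v')).trans ?_
    have h1 : ‖A v‖ + ‖A v'‖ ≤ 2 * ‖A‖ * R := by
      have e1 := (A.le_opNorm v).trans (mul_le_mul_of_nonneg_left hv (norm_nonneg A))
      have e2 := (A.le_opNorm v').trans (mul_le_mul_of_nonneg_left hv' (norm_nonneg A))
      linarith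
    have h2 : ‖A v - A v'‖ ≤ ‖A‖ * ‖v - v'‖ := by
      rw [← map_sub]; exact A.le_opNorm _
    calc (p : ℝ) * (‖A v‖ + ‖A v'‖) ^ (p - 1) * ‖A v - A v'‖
        ≤ (p : ℝ) * (2 * ‖A‖ * R) ^ (p - 1) * (‖A‖ * ‖v - v'‖) := by gcongr
      _ = K * ‖v - v'‖ := by rw [hKdef]; ring
  obtain ⟨Tstar, hTs, u, hu1, hu2⟩ :=
    picard_aux u₀ u₁ T hT h hmeas habs F hFcont R M K hM0 hK0 (le_refl R) hFb hFlip
  exact ⟨Tstar, hTs, u, hu1, hu2⟩
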